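/- Let R be a k-algebra generated by a set X, τ a k-algebra automorphism of R, and δ a k-linear left τ-derivation. (i) If there is q ∈ k with δτ(x) = qτδ(x) for all x ∈ X, then δτ = qτδ on all of R. (ii) If δτ = qτδ and for each x ∈ X there is d with δ^d(x) = 0, then δ is locally nilpotent. -/

import Mathlib

section Aux

variable {k : Type*} [Field k] {R : Type*} [Ring R] [Algebra k R]
  (τ : R ≃ₐ[k] R) (δ : R →ₗ[k] R)

theorem deriv_one_aux (hder : ∀ a b : R, δ (a * b) = τ a * δ b + δ a * b) : δ 1 = 0 := by
  have h := hder 1 1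
  simp only [one_mul, mul_one, map_one] at h
  exact right_eq_add.mp h

theorem iter_pow_aux (n : ℕ) (x : R) : (⇑δ)^[n] x = (δ ^ n) x :=
  (Module.End.pow_apply δ n x).symm

theorem iter_zero_aux (m : ℕ) : (⇑δ)^[m] (0 : R) = 0 := by
  rw [iter_pow_aux, map_zero]

theorem comm_iterate_aux {q : k} (hq : ∀ a : R, δ (τ a) = q • τ (δ a)) (n : ℕ) (a : R) :
    (⇑δ)^[n] (τ a) = q ^ n • τ ((⇑δ)^[n] a) := by
  induction n generalizing a with
  | zero => simp
  | succ n ih =>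
    rw [Function.iterate_succ_apply, hq a, iter_pow_aux, map_smul, ← iter_pow_aux,
      ih (δ a), ← Function.iterate_succ_apply, smul_smul, pow_succ, mul_comm]

theorem nilp_mul_aux (hder : ∀ a b : R, δ (a * b) = τ a * δ b + δ a * b)
    {q : k} (hq : ∀ a : R, δ (τ a) = q • τ (δ a)) :
    ∀ s M N : ℕ, M + N = s → ∀ a b : R, (⇑δ)^[M + 1] a = 0 → (⇑δ)^[N + 1] b = 0 →
      (⇑δ)^[M + N + 1] (a * b) = 0 := by
  intro s
  induction s using Nat.strong_induction_on with
  | _ s ih =>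
    intro M N hs a b ha hb
    rw [Function.iterate_succ_apply, hder a b, iter_pow_aux, map_add, ← iter_pow_aux,
      ← iter_pow_aux]
    have h1 : (⇑δ)^[M + N] (τ a * δ b) = 0 := by
      rcases Nat.eq_zero_or_pos N with hN | hN
      · subst hN
        have hb0 : δ b = 0 := by simpa using hb
        rw [hb0, mul_zero]; exact iter_zero_aux δ _
      · obtain ⟨N', rfl⟩ := Nat.exists_eq_add_of_le hN
        have hτa : (⇑δ)^[M + 1] (τ a) = 0 := by
          rw [comm_iterate_aux τ δ hq, ha, map_zero, smul_zero]
        have hδb : (⇑δ)^[N' + 1] (δ b) = 0 := by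
          rw [← Function.iterate_succ_apply]
          simpa [Nat.add_comm] using hb
        have := ih (M + N') (by omega) M N' rfl (τ a) (δ b) hτa hδb
        have heq : M + (1 + N') = (M + N') + 1 := by omega
        rw [heq]; exact this
    have h2 : (⇑δ)^[M + N] (δ a * b) = 0 := by
      rcases Nat.eq_zero_or_pos M with hM | hM
      · subst hM
        have ha0 : δ a = 0 := by simpa using ha
        rw [ha0, zero_mul]; exact iter_zero_aux δ _
      · obtain ⟨M', rfl⟩ := Nat.exists_eq_add_of_le hM
        have hδa : (⇑δ)^[M' + 1] (δ a) = 0 := by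
          rw [← Function.iterate_succ_apply]
          simpa [Nat.add_comm] using ha
        have := ih (M' + N) (by omega) M' N rfl (δ a) b hδa hb
        have heq : 1 + M' + N = (M' + N) + 1 := by omega
        rw [heq]; exact this
    rw [h1, h2, add_zero]

end Aux

/-- For a `k`-algebra `R` generated by a set `X`, an automorphism `τ` and a left
`τ`-derivation `δ`: (i) if `δτ = qτδ` holds on `X`, it holds on all of `R`;
(ii) if `δτ = qτδ` and `δ` kills a power of each element of `X`, then `δ` is locally
nilpotent. -/
theorem derivation_generators {k : Type*} [Field k] {R : Type*} [Ring R] [Algebra k R]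
    (X : Set R) (hgen : Algebra.adjoin k X = ⊤)
    (τ : R ≃ₐ[k] R) (δ : R →ₗ[k] R)
    (hder : ∀ a b : R, δ (a * b) = τ a * δ b + δ a * b) :
    (∀ q : k, (∀ x ∈ X, δ (τ x) = q • τ (δ x)) → ∀ a : R, δ (τ a) = q • τ (δ a)) ∧
    (∀ q : k, (∀ a : R, δ (τ a) = q • τ (δ a)) →
      (∀ x ∈ X, ∃ d : ℕ, 0 < d ∧ (⇑δ)^[d] x = 0) →
      ∀ a : R, ∃ n : ℕ, (⇑δ)^[n] a = 0) := by
  have hδ1 : δ 1 = 0 := deriv_one_aux τ δ hder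
  constructor
  · intro q hX a
    have ha : a ∈ Algebra.adjoin k X := by rw [hgen]; trivial
    induction ha using Algebra.adjoin_induction with
    | mem x hx => exact hX x hx
    | algebraMap r =>
      have h1 : (algebraMap k R) r = r • (1 : R) := by
        rw [Algebra.smul_def, mul_one]
      simp [h1, hδ1]
    | add x y hx hy ihx ihy =>
      rw [map_add, map_add, map_add, ihx, ihy, map_add, smul_add]
    | mul x y hx hy ihx ihy =>
      rw [map_mul, hder (τ x) (τ y), ihx, ihy, hder x y, map_add, map_mul, map_mul,
        smul_add, mul_smul_comm, smul_mul_assoc]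
  · intro q hq hX a
    have ha : a ∈ Algebra.adjoin k X := by rw [hgen]; trivial
    induction ha using Algebra.adjoin_induction with
    | mem x hx =>
      obtain ⟨d, _, hd⟩ := hX x hx
      exact ⟨d, hd⟩
    | algebraMap r =>
      refine ⟨1, ?_⟩
      have h1 : (algebraMap k R) r = r • (1 : R) := by rw [Algebra.smul_def, mul_one]
      simp [h1, hδ1]
    | add x y hx hy ihx ihy =>
      obtain ⟨m, hm⟩ := ihx
      obtain ⟨n, hn⟩ := ihy
      refine ⟨max m n, ?_⟩
      have hx0 : (⇑δ)^[max m n] x = 0 := by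
        rw [← Nat.sub_add_cancel (le_max_left m n), Function.iterate_add_apply, hm]
        exact iter_zero_aux δ _
      have hy0 : (⇑δ)^[max m n] y = 0 := by
        rw [← Nat.sub_add_cancel (le_max_right m n), Function.iterate_add_apply, hn]
        exact iter_zero_aux δ _
      rw [iter_pow_aux, map_add, ← iter_pow_aux, ← iter_pow_aux, hx0, hy0, add_zero]
    | mul x y hx hy ihx ihy =>
      obtain ⟨m, hm⟩ := ihx
      obtain ⟨n, hn⟩ := ihy
      rcases Nat.eq_zero_or_pos m with hm0 | hm0
      · subst hm0
        simp only [Function.iterate_zero, id] at hm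
        exact ⟨0, by simp [hm]⟩
      rcases Nat.eq_zero_or_pos n with hn0 | hn0
      · subst hn0
        simp only [Function.iterate_zero, id] at hn
        exact ⟨0, by simp [hn]⟩
      obtain ⟨m', rfl⟩ := Nat.exists_eq_add_of_le hm0
      obtain ⟨n', rfl⟩ := Nat.exists_eq_add_of_le hn0
      refine ⟨m' + n' + 1, nilp_mul_aux τ δ hder hq (m' + n') m' n' rfl x y ?_ ?_⟩
      · simpa [Nat.add_comm] using hm
      · simpa [Nat.add_comm] using hn
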